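/- For every integer n ≥ 1 and every p ∈ [1, ∞], the Mahler volume of the l^p unit ball satisfies Vol(B^n_p) · Vol((B^n_p)°) ≥ 4^n / n!. -/

import Mathlib

open MeasureTheory Real
open scoped ENNReal

lemma aux_nonneg_of_deriv {f f' : ℝ → ℝ} (hd : ∀ x, HasDerivAt f (f' x) x)
    (h0 : f 0 = 0) (hf' : ∀ x, 0 ≤ x → 0 ≤ f' x) {x : ℝ} (hx : 0 ≤ x) : 0 ≤ f x := by
  have hmono : MonotoneOn f (Set.Ici (0:ℝ)) := by
    apply monotoneOn_of_deriv_nonneg (convex_Ici 0)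
      (fun y _ => (hd y).continuousAt.continuousWithinAt)
      (fun y hy => ((hd y).differentiableAt).differentiableWithinAt)
    intro y hy
    rw [(hd y).deriv]
    exact hf' y (le_of_lt (by simpa using hy))
  have := hmono (Set.self_mem_Ici) hx hx
  simpa [h0] using this

lemma aux_sin_ge {x : ℝ} (hx : 0 ≤ x) : x - x ^ 3 / 6 ≤ Real.sin x := by
  have := aux_nonneg_of_deriv (f := fun x => Real.sin x - x + x ^ 3 / 6)
    (f' := fun x => Real.cos x - 1 + 3 * x ^ 2 / 6)
    (fun y => (((Real.hasDerivAt_sin y).sub (hasDerivAt_id y)).add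
      ((hasDerivAt_pow 3 y).div_const 6)).congr_deriv (by ring))
    (by norm_num)
    (fun y hy => by nlinarith [Real.one_sub_sq_div_two_le_cos (x := y)])
    hx
  linarith [this]

lemma aux_cos_le {x : ℝ} (hx : 0 ≤ x) : Real.cos x ≤ 1 - x ^ 2 / 2 + x ^ 4 / 24 := by
  have := aux_nonneg_of_deriv (f := fun x => 1 - x ^ 2 / 2 + x ^ 4 / 24 - Real.cos x)
    (f' := fun x => -(2 * x) / 2 + 4 * x ^ 3 / 24 + Real.sin x)
    (fun y => ((((hasDerivAt_const y (1:ℝ)).sub ((hasDerivAt_pow 2 y).div_const 2)).add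
      ((hasDerivAt_pow 4 y).div_const 24)).sub (Real.hasDerivAt_cos y)).congr_deriv (by ring))
    (by norm_num)
    (fun y hy => by nlinarith [aux_sin_ge hy])
    hx
  linarith [this]

lemma aux_sin_le {x : ℝ} (hx : 0 ≤ x) : Real.sin x ≤ x - x ^ 3 / 6 + x ^ 5 / 120 := by
  have := aux_nonneg_of_deriv (f := fun x => x - x ^ 3 / 6 + x ^ 5 / 120 - Real.sin x)
    (f' := fun x => 1 - 3 * x ^ 2 / 6 + 5 * x ^ 4 / 120 - Real.cos x)
    (fun y => ((((hasDerivAt_id y).sub ((hasDerivAt_pow 3 y).div_const 6)).add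
      ((hasDerivAt_pow 5 y).div_const 120)).sub (Real.hasDerivAt_sin y)).congr_deriv (by ring))
    (by norm_num)
    (fun y hy => by nlinarith [aux_cos_le hy])
    hx
  linarith [this]

lemma aux_gautschi {x t : ℝ} (hx : 0 < x) (ht0 : 0 ≤ t) (ht1 : t ≤ 1) :
    Real.Gamma (x + t) ≤ Real.Gamma x * x ^ t := by
  have hx1 : (0:ℝ) < x + 1 := by linarith
  have hΓx : 0 < Real.Gamma x := Real.Gamma_pos_of_pos hx
  have hΓxt : 0 < Real.Gamma (x + t) := Real.Gamma_pos_of_pos (by linarith)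
  have hc := Real.convexOn_log_Gamma.2 (Set.mem_Ioi.mpr hx) (Set.mem_Ioi.mpr hx1)
    (by linarith : (0:ℝ) ≤ 1 - t) ht0 (by ring)
  have hs : (1 - t) • x + t • (x + 1) = x + t := by simp [smul_eq_mul]; ring
  rw [hs] at hc
  simp only [Function.comp_apply, smul_eq_mul] at hc
  have hΓx1 : Real.Gamma (x + 1) = x * Real.Gamma x := Real.Gamma_add_one hx.ne'
  rw [hΓx1, Real.log_mul hx.ne' hΓx.ne'] at hc
  have hc2 : Real.log (Real.Gamma (x + t)) ≤ Real.log (Real.Gamma x) + t * Real.log x := by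
    nlinarith
  have := Real.exp_le_exp.mpr hc2
  rw [Real.exp_log hΓxt, Real.exp_add, Real.exp_log hΓx, mul_comm t (Real.log x),
    ← Real.rpow_def_of_pos hx] at this
  exact this

lemma aux_gamma_prod_ge_aux {a : ℝ} (ha : 0 < a) (ha2 : a ≤ 1/2) :
    1 - a * (1 - a) ≤ Real.Gamma (1 + a) * Real.Gamma (1 + (1 - a)) := by
  have hπ := Real.pi_gt_d6
  have hπ' := Real.pi_lt_d2
  have hπpos := Real.pi_pos
  have hsin_pos : 0 < Real.sin (π * a) :=
    Real.sin_pos_of_pos_of_lt_pi (by positivity) (by nlinarith)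
  have e1 : Real.Gamma (1 + a) = a * Real.Gamma a := by
    rw [add_comm]; exact Real.Gamma_add_one ha.ne'
  have e2 : Real.Gamma (1 + (1 - a)) = (1 - a) * Real.Gamma (1 - a) := by
    rw [add_comm]; exact Real.Gamma_add_one (by linarith)
  have erefl : Real.Gamma a * Real.Gamma (1 - a) = π / Real.sin (π * a) :=
    Real.Gamma_mul_Gamma_one_sub a
  rw [e1, e2, mul_mul_mul_comm, erefl]
  rw [← mul_div_assoc, le_div_iff₀ hsin_pos]
  -- goal : (1 - a * (1 - a)) * Real.sin (π * a) ≤ a * (1 - a) * π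
  have h1 : Real.sin (π * a) ≤ π * a - (π*a) ^ 3 / 6 + (π*a) ^ 5 / 120 :=
    aux_sin_le (by positivity)
  have h2 : (π*a) ^ 5 ≤ (π*a) ^ 3 * (π ^ 2 / 4) := by
    have hle : (π*a) ^ 2 ≤ π ^ 2 / 4 := by
      have ha4 : a ^ 2 ≤ 1/4 := by nlinarith
      calc (π*a) ^ 2 = π ^ 2 * a ^ 2 := by ring
        _ ≤ π ^ 2 * (1/4) := mul_le_mul_of_nonneg_left ha4 (sq_nonneg π)
        _ = π ^ 2 / 4 := by ring
    calc (π*a) ^ 5 = (π*a) ^ 3 * (π*a) ^ 2 := by ring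
      _ ≤ (π*a) ^ 3 * (π ^ 2 / 4) := mul_le_mul_of_nonneg_left hle (by positivity)
  have hK : (4:ℝ) / 3 ≤ π ^ 2 / 6 - π ^ 4 / 480 := by
    have hsq : (9.869:ℝ) < π ^ 2 := by nlinarith
    have hsq' : π ^ 2 < 9.9225 := by nlinarith
    have h4p : π ^ 4 < 98.46 := by nlinarith
    nlinarith
  have step2 : π * a ^ 3 * (4/3) ≤ π * a ^ 3 * (π ^ 2 / 6 - π ^ 4 / 480) :=
    mul_le_mul_of_nonneg_left hK (by positivity)
  have h3 : Real.sin (π * a) ≤ π * a * (1 - (4/3) * a ^ 2) := by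
    nlinarith [h1, h2, step2]
  have h4 : (0:ℝ) ≤ 1 - a * (1 - a) := by nlinarith
  have h5 : (1 - a * (1 - a)) * (π * a * (1 - (4/3) * a ^ 2)) ≤ a * (1 - a) * π := by
    nlinarith [mul_nonneg (mul_nonneg hπpos.le (pow_nonneg ha.le 3)) (sq_nonneg (a - 1/2))]
  calc (1 - a * (1 - a)) * Real.sin (π * a)
      ≤ (1 - a * (1 - a)) * (π * a * (1 - (4/3) * a ^ 2)) := by
        exact mul_le_mul_of_nonneg_left h3 h4
    _ ≤ a * (1 - a) * π := h5

lemma aux_gamma_prod_ge {a : ℝ} (ha : 0 < a) (ha1 : a < 1) :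
    1 - a * (1 - a) ≤ Real.Gamma (1 + a) * Real.Gamma (1 + (1 - a)) := by
  rcases le_or_gt a (1/2) with h | h
  · exact aux_gamma_prod_ge_aux ha h
  · have := aux_gamma_prod_ge_aux (a := 1 - a) (by linarith) (by linarith)
    have e : 1 - (1 - a) = a := by ring
    rw [e] at this
    calc 1 - a * (1 - a) = 1 - (1 - a) * a := by ring
      _ ≤ Real.Gamma (1 + (1 - a)) * Real.Gamma (1 + a) := this
      _ = Real.Gamma (1 + a) * Real.Gamma (1 + (1 - a)) := mul_comm _ _

lemma aux_gamma_key {a : ℝ} (ha : 0 < a) (ha1 : a < 1) :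
    ∀ n : ℕ, 1 ≤ n →
      Real.Gamma (1 + n * a) * Real.Gamma (1 + n * (1 - a)) ≤
        (n.factorial : ℝ) * (Real.Gamma (1 + a) * Real.Gamma (1 + (1 - a))) ^ n := by
  have hb : (0:ℝ) < 1 - a := by linarith
  set G := Real.Gamma (1 + a) * Real.Gamma (1 + (1 - a)) with hG
  have hGpos : 0 < G :=
    mul_pos (Real.Gamma_pos_of_pos (by linarith)) (Real.Gamma_pos_of_pos (by linarith))
  intro n hn
  induction n, hn using Nat.le_induction with
  | base => simp [hG]
  | succ k hk ih =>
    have ihk := ih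
    have hka : (0:ℝ) < 1 + k * a := by positivity
    have hkb : (0:ℝ) < 1 + k * (1 - a) := by positivity
    have g1 : Real.Gamma (1 + (k+1 : ℕ) * a) ≤ Real.Gamma (1 + k * a) * (1 + k * a) ^ (a:ℝ) := by
      have := aux_gautschi hka ha.le ha1.le
      have e : (1 + k * a) + a = 1 + (k+1 : ℕ) * a := by push_cast; ring
      rwa [e] at this
    have g2 : Real.Gamma (1 + (k+1 : ℕ) * (1 - a)) ≤
        Real.Gamma (1 + k * (1 - a)) * (1 + k * (1 - a)) ^ ((1 - a):ℝ) := by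
      have := aux_gautschi hkb hb.le (by linarith)
      have e : (1 + k * (1 - a)) + (1 - a) = 1 + (k+1 : ℕ) * (1 - a) := by push_cast; ring
      rwa [e] at this
    have hΓ1 : 0 < Real.Gamma (1 + (k+1 : ℕ) * a) := Real.Gamma_pos_of_pos (by positivity)
    have hΓ2 : 0 < Real.Gamma (1 + (k+1 : ℕ) * (1 - a)) := Real.Gamma_pos_of_pos (by positivity)
    have hΓka : 0 < Real.Gamma (1 + k * a) := Real.Gamma_pos_of_pos hka
    have hΓkb : 0 < Real.Gamma (1 + k * (1 - a)) := Real.Gamma_pos_of_pos hkb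
    have amgm : (1 + k * a) ^ (a:ℝ) * (1 + k * (1 - a)) ^ ((1 - a):ℝ) ≤
        a * (1 + k * a) + (1 - a) * (1 + k * (1 - a)) :=
      Real.geom_mean_le_arith_mean2_weighted ha.le hb.le hka.le hkb.le (by ring)
    have key3 : a * (1 + k * a) + (1 - a) * (1 + k * (1 - a)) ≤ (k + 1 : ℝ) * G := by
      have hab := aux_gamma_prod_ge ha ha1
      have hk1 : (1:ℝ) ≤ (k:ℝ) := by exact_mod_cast hk
      have habnn : 0 ≤ a * (1 - a) := by positivity
      nlinarith [hab, mul_le_mul_of_nonneg_left hab (by positivity : (0:ℝ) ≤ (k:ℝ) + 1)]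
    calc Real.Gamma (1 + (k+1 : ℕ) * a) * Real.Gamma (1 + (k+1 : ℕ) * (1 - a))
        ≤ (Real.Gamma (1 + k * a) * (1 + k * a) ^ (a:ℝ)) *
          (Real.Gamma (1 + k * (1 - a)) * (1 + k * (1 - a)) ^ ((1 - a):ℝ)) := by
          exact mul_le_mul g1 g2 hΓ2.le (by positivity)
      _ = (Real.Gamma (1 + k * a) * Real.Gamma (1 + k * (1 - a))) *
          ((1 + k * a) ^ (a:ℝ) * (1 + k * (1 - a)) ^ ((1 - a):ℝ)) := by ring
      _ ≤ ((k.factorial : ℝ) * G ^ k) * ((k + 1 : ℝ) * G) := by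
          apply mul_le_mul ihk (le_trans amgm key3) (by positivity) (by positivity)
      _ = ((k+1 : ℕ).factorial : ℝ) * G ^ (k + 1) := by
          rw [Nat.factorial_succ]; push_cast; ring

/-- The open unit ball of the `l^p` norm in `ℝ^n`, for `p ∈ [1, ∞]`. -/
noncomputable def lpBall (n : ℕ) (p : ℝ≥0∞) : Set (Fin n → ℝ) :=
  if p = ⊤ then {x | ∀ i, |x i| < 1} else {x | ∑ i, |x i| ^ p.toReal < 1}

/-- The polar of a subset of `ℝ^n` with respect to the Euclidean inner product. -/
def polarSet {n : ℕ} (S : Set (Fin n → ℝ)) : Set (Fin n → ℝ) :=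
  {x | ∀ y ∈ S, ∑ i, y i * x i ≤ 1}

lemma aux_vol_ball (n : ℕ) {w : ℝ} (hw : 1 ≤ w) :
    volume {x : Fin n → ℝ | ∑ i, |x i| ^ w < 1} =
      ENNReal.ofReal ((2 * Real.Gamma (1 / w + 1)) ^ n / Real.Gamma (n / w + 1)) := by
  have := MeasureTheory.volume_sum_rpow_lt_one (Fin n) hw
  simpa using this

lemma aux_vol_cube (n : ℕ) :
    volume {x : Fin n → ℝ | ∀ i, |x i| < 1} = ENNReal.ofReal ((2:ℝ) ^ n) := by
  have h : {x : Fin n → ℝ | ∀ i, |x i| < 1} =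
      Set.pi Set.univ (fun _ : Fin n => Set.Ioo (-1:ℝ) 1) := by
    ext x
    simp [abs_lt, Set.mem_pi, and_comm]
  rw [h, volume_pi_pi]
  simp only [Real.volume_Ioo]
  rw [Finset.prod_const, Finset.card_univ, Fintype.card_fin,
    ← ENNReal.ofReal_pow (by norm_num)]
  norm_num

lemma aux_vol_l1 (n : ℕ) :
    volume {x : Fin n → ℝ | ∑ i, |x i| ^ (1:ℝ) < 1} =
      ENNReal.ofReal ((2:ℝ) ^ n / n.factorial) := by
  rw [aux_vol_ball n le_rfl]
  congr 1
  rw [div_one, div_one]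
  rw [show (1:ℝ) + 1 = 2 by norm_num, Real.Gamma_two]
  rw [show ((n:ℝ) + 1) = (n:ℝ) + 1 from rfl, Real.Gamma_nat_eq_factorial]
  norm_num

/-- For every `n ≥ 1` and every `p ∈ [1, ∞]`, the Mahler volume of the `l^p`
unit ball satisfies `Vol(B^n_p) · Vol((B^n_p)°) ≥ 4^n / n!`. -/
theorem mahler_volume_lpBall_ge (n : ℕ) (hn : 1 ≤ n) (p : ℝ≥0∞) (hp : 1 ≤ p) :
    ENNReal.ofReal (4 ^ n / (Nat.factorial n : ℝ)) ≤
      volume (lpBall n p) * volume (polarSet (lpBall n p)) := by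
  have hfac : (0:ℝ) < n.factorial := by exact_mod_cast n.factorial_pos
  have hsplit : ENNReal.ofReal (4 ^ n / (Nat.factorial n : ℝ)) =
      ENNReal.ofReal ((2:ℝ) ^ n) * ENNReal.ofReal ((2:ℝ) ^ n / n.factorial) := by
    rw [← ENNReal.ofReal_mul (by positivity)]
    congr 1
    rw [mul_div_assoc', ← mul_pow]
    norm_num
  rcases eq_or_ne p ⊤ with hptop | hptop
  · -- p = ∞ : ball is the cube, polar contains the `l¹` ball
    have hball : lpBall n p = {x | ∀ i, |x i| < 1} := if_pos hptop
    have hsub : {x : Fin n → ℝ | ∑ i, |x i| ^ (1:ℝ) < 1} ⊆ polarSet (lpBall n p) := by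
      intro x hx y hy
      rw [hball] at hy
      calc ∑ i, y i * x i ≤ ∑ i, |x i| := Finset.sum_le_sum (fun i _ => by
            calc y i * x i ≤ |y i * x i| := le_abs_self _
              _ = |y i| * |x i| := abs_mul _ _
              _ ≤ 1 * |x i| := mul_le_mul_of_nonneg_right (hy i).le (abs_nonneg _)
              _ = |x i| := one_mul _)
        _ = ∑ i, |x i| ^ (1:ℝ) := by simp [Real.rpow_one]
        _ ≤ 1 := hx.le
    rw [hsplit]
    exact mul_le_mul' (le_of_eq (by rw [hball, aux_vol_cube]))
      (by rw [← aux_vol_l1]; exact measure_mono hsub)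
  · -- p finite
    have hw1 : 1 ≤ p.toReal := by
      have := ENNReal.toReal_mono hptop hp
      simpa using this
    set w := p.toReal with hwdef
    have hball : lpBall n p = {x | ∑ i, |x i| ^ w < 1} := if_neg hptop
    rcases eq_or_lt_of_le hw1 with heq | hlt
    · -- p = 1 : ball is the `l¹` ball, polar contains the cube
      have hsub : {x : Fin n → ℝ | ∀ i, |x i| < 1} ⊆ polarSet (lpBall n p) := by
        intro x hx y hy
        rw [hball] at hy
        calc ∑ i, y i * x i ≤ ∑ i, |y i| := Finset.sum_le_sum (fun i _ => by
              calc y i * x i ≤ |y i * x i| := le_abs_self _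
                _ = |y i| * |x i| := abs_mul _ _
                _ ≤ |y i| * 1 := mul_le_mul_of_nonneg_left (hx i).le (abs_nonneg _)
                _ = |y i| := mul_one _)
          _ = ∑ i, |y i| ^ w := by rw [← heq]; simp [Real.rpow_one]
          _ ≤ 1 := hy.le
      rw [hsplit, mul_comm (ENNReal.ofReal ((2:ℝ)^n))]
      refine mul_le_mul' (le_of_eq ?_) (by rw [← aux_vol_cube]; exact measure_mono hsub)
      rw [hball, ← heq, aux_vol_l1]
    · -- 1 < p < ∞
      have hq : w.HolderConjugate (w.conjExponent) := Real.HolderConjugate.conjExponent hlt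
      set q := w.conjExponent with hqdef
      have hq1 : 1 ≤ q := hq.symm.lt.le
      set a := 1 / w with hadef
      have ha : 0 < a := by rw [hadef]; positivity
      have ha1 : a < 1 := by rw [hadef, div_lt_one (by linarith)]; exact hlt
      have hqa : 1 / q = 1 - a := by
        rw [hadef, one_div, one_div, ← hq.one_sub_inv]
      -- polar contains the open `l^q` ball
      have hsub : {x : Fin n → ℝ | ∑ i, |x i| ^ q < 1} ⊆ polarSet (lpBall n p) := by
        intro x hx y hy
        rw [hball] at hy
        calc ∑ i, y i * x i
            ≤ ∑ i, (|y i| ^ w / w + |x i| ^ q / q) := Finset.sum_le_sum (fun i _ => by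
              calc y i * x i ≤ |y i * x i| := le_abs_self _
                _ = |y i| * |x i| := abs_mul _ _
                _ ≤ |y i| ^ w / w + |x i| ^ q / q :=
                    Real.young_inequality_of_nonneg (abs_nonneg _) (abs_nonneg _) hq)
          _ = (∑ i, |y i| ^ w) / w + (∑ i, |x i| ^ q) / q := by
              rw [Finset.sum_add_distrib, Finset.sum_div, Finset.sum_div]
          _ ≤ 1 / w + 1 / q := by
              gcongr <;>
                first
                  | exact hq.pos
                  | exact hq.symm.pos
                  | exact hy.le
                  | exact hx.le
          _ = 1 := by rw [one_div, one_div]; exact hq.inv_add_inv_eq_one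
      -- the real inequality from the Gamma estimates
      have hΓna : 0 < Real.Gamma ((n:ℝ) / w + 1) := Real.Gamma_pos_of_pos (by positivity)
      have hΓnb : 0 < Real.Gamma ((n:ℝ) / q + 1) := Real.Gamma_pos_of_pos (by positivity)
      have key := aux_gamma_key ha ha1 n hn
      have hreal : 4 ^ n / (n.factorial : ℝ) ≤
          (2 * Real.Gamma (1 / w + 1)) ^ n / Real.Gamma ((n:ℝ) / w + 1) *
          ((2 * Real.Gamma (1 / q + 1)) ^ n / Real.Gamma ((n:ℝ) / q + 1)) := by
        have e1 : (n:ℝ) / w = n * a := by rw [hadef]; ring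
        have e2 : (n:ℝ) / q = n * (1 - a) := by rw [← hqa]; ring
        rw [div_mul_div_comm, e1, e2, hqa]
        rw [div_le_div_iff₀ hfac (by rw [← e1, ← e2] at *; positivity)]
        have hΓa : 0 < Real.Gamma (1 + a) := Real.Gamma_pos_of_pos (by linarith)
        have hΓb : 0 < Real.Gamma (1 + (1 - a)) := Real.Gamma_pos_of_pos (by linarith)
        calc 4 ^ n * (Real.Gamma (n * a + 1) * Real.Gamma (n * (1 - a) + 1))
            = 4 ^ n * (Real.Gamma (1 + n * a) * Real.Gamma (1 + n * (1 - a))) := by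
              rw [add_comm (n * a : ℝ) 1, add_comm (n * (1 - a) : ℝ) 1]
          _ ≤ 4 ^ n * ((n.factorial : ℝ) *
              (Real.Gamma (1 + a) * Real.Gamma (1 + (1 - a))) ^ n) := by
              exact mul_le_mul_of_nonneg_left key (by positivity)
          _ = (2 * Real.Gamma (a + 1)) ^ n * (2 * Real.Gamma (1 - a + 1)) ^ n *
              (n.factorial : ℝ) := by
              rw [add_comm (a:ℝ) 1, add_comm (1 - a : ℝ) 1, ← mul_pow,
                show (2:ℝ) * Real.Gamma (1 + a) * (2 * Real.Gamma (1 + (1 - a)))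
                  = 4 * (Real.Gamma (1 + a) * Real.Gamma (1 + (1 - a))) from by ring,
                mul_pow]
              ring
      calc ENNReal.ofReal (4 ^ n / (n.factorial : ℝ))
          ≤ ENNReal.ofReal ((2 * Real.Gamma (1 / w + 1)) ^ n / Real.Gamma ((n:ℝ) / w + 1) *
              ((2 * Real.Gamma (1 / q + 1)) ^ n / Real.Gamma ((n:ℝ) / q + 1))) :=
            ENNReal.ofReal_le_ofReal hreal
        _ = ENNReal.ofReal ((2 * Real.Gamma (1 / w + 1)) ^ n / Real.Gamma ((n:ℝ) / w + 1)) *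
            ENNReal.ofReal ((2 * Real.Gamma (1 / q + 1)) ^ n / Real.Gamma ((n:ℝ) / q + 1)) := by
            rw [ENNReal.ofReal_mul (by positivity)]
        _ ≤ volume (lpBall n p) * volume (polarSet (lpBall n p)) := by
            refine mul_le_mul' (le_of_eq ?_) ?_
            · rw [hball, aux_vol_ball n hw1]
            · rw [← aux_vol_ball n hq1]
              exact measure_mono hsub
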